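/- Let v_1, …, v_n be vectors in ℍ^d with synthesis matrix V = [v_1, …, v_n] ∈ ℍ^{d×n}. The following are equivalent: (i) ∑_j |⟨x, v_j⟩|² = ‖x‖² for all x ∈ ℍ^d (normalised tight frame); (ii) x = ∑_j v_j·⟨x, v_j⟩ for all x ∈ ℍ^d, equivalently V·Vᴴ = I_d; (iii) the Plancherel identity ⟨x,y⟩ = ∑_j ⟨v_j, y⟩·⟨x, v_j⟩ holds for all x, y ∈ ℍ^d; (iv) the Gramian P := Vᴴ·V satisfies P² = P, Pᴴ = P, and Re(trace(P)) = d. -/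

import Mathlib

open Quaternion Matrix BigOperators

/-- Euclidean inner product on `ℍ^d`: `⟨v,w⟩ = ∑ i, conj (w i) * v i`
(linear in the first variable). -/
noncomputable def qip {d : ℕ} (v w : Fin d → ℍ[ℝ]) : ℍ[ℝ] :=
  ∑ i, star (w i) * v i

/-- Squared Euclidean norm on `ℍ^d`, a nonnegative real. -/
noncomputable def nsq {d : ℕ} (v : Fin d → ℍ[ℝ]) : ℝ :=
  ∑ i, Quaternion.normSq (v i)

namespace NTFAux

lemma re_sum {ι : Type*} (s : Finset ι) (f : ι → ℍ[ℝ]) :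
    (∑ i ∈ s, f i).re = ∑ i ∈ s, (f i).re :=
  map_sum (QuaternionAlgebra.reₗ (R := ℝ) (-1) 0 (-1)) f s

lemma coe_sum {ι : Type*} (s : Finset ι) (f : ι → ℝ) :
    ((∑ i ∈ s, f i : ℝ) : ℍ[ℝ]) = ∑ i ∈ s, ((f i : ℝ) : ℍ[ℝ]) := by
  rw [← Quaternion.algebraMap_def]; exact map_sum (algebraMap ℝ ℍ[ℝ]) f s

lemma re_mul_comm (p q : ℍ[ℝ]) : (p * q).re = (q * p).re := by
  simp only [Quaternion.re_mul]; ring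

lemma qip_star {d : ℕ} (v w : Fin d → ℍ[ℝ]) : qip w v = star (qip v w) := by
  simp [qip, star_sum, mul_comm]

lemma qip_mul_self {d : ℕ} (v w : Fin d → ℍ[ℝ]) :
    qip w v * qip v w = ((Quaternion.normSq (qip v w) : ℝ) : ℍ[ℝ]) := by
  rw [qip_star]; exact Quaternion.star_mul_self _

lemma qip_self {d : ℕ} (x : Fin d → ℍ[ℝ]) : qip x x = ((nsq x : ℝ) : ℍ[ℝ]) := by
  rw [nsq, coe_sum]
  exact Finset.sum_congr rfl fun i _ => Quaternion.star_mul_self _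

lemma qip_expand {d n : ℕ} (V : Matrix (Fin d) (Fin n) ℍ[ℝ]) (x y : Fin d → ℍ[ℝ]) :
    ∑ j, qip (fun i => V i j) y * qip x (fun i => V i j)
      = ∑ i, ∑ k, star (y i) * (V * Vᴴ) i k * x k := by
  have key : ∀ (i k : Fin d), star (y i) * (V * Vᴴ) i k * x k
      = ∑ j, star (y i) * V i j * (star (V k j) * x k) := by
    intro i k
    rw [Matrix.mul_apply]
    simp only [conjTranspose_apply, Finset.mul_sum, Finset.sum_mul]
    exact Finset.sum_congr rfl fun j _ => by simp only [mul_assoc]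
  have key2 : ∀ j, qip (fun i => V i j) y * qip x (fun i => V i j)
      = ∑ i, ∑ k, star (y i) * V i j * (star (V k j) * x k) := by
    intro j
    rw [qip, qip, Finset.sum_mul_sum]
  simp only [key, key2]
  rw [Finset.sum_comm]
  exact Finset.sum_congr rfl fun i _ => Finset.sum_comm

lemma frame_expand {d n : ℕ} (V : Matrix (Fin d) (Fin n) ℍ[ℝ]) (x : Fin d → ℍ[ℝ]) (i : Fin d) :
    ∑ j, V i j * qip x (fun i' => V i' j) = ∑ k, (V * Vᴴ) i k * x k := by
  have key : ∀ k : Fin d, (V * Vᴴ) i k * x k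
      = ∑ j, V i j * (star (V k j) * x k) := by
    intro k
    rw [Matrix.mul_apply]
    simp only [conjTranspose_apply, Finset.sum_mul]
    exact Finset.sum_congr rfl fun j _ => by simp only [mul_assoc]
  have key2 : ∀ j, V i j * qip x (fun i' => V i' j)
      = ∑ k, V i j * (star (V k j) * x k) := by
    intro j
    rw [qip, Finset.mul_sum]
  simp only [key, key2]
  exact Finset.sum_comm

lemma trace_re_conjT_mul {a b : ℕ} (M : Matrix (Fin a) (Fin b) ℍ[ℝ]) :
    ((Mᴴ * M).trace).re = ∑ j, ∑ i, Quaternion.normSq (M i j) := by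
  simp only [Matrix.trace, Matrix.diag, Matrix.mul_apply, conjTranspose_apply, re_sum]
  refine Finset.sum_congr rfl fun j _ => Finset.sum_congr rfl fun i _ => ?_
  rw [Quaternion.star_mul_self]; simp

lemma eq_zero_of_trace_re {a b : ℕ} (M : Matrix (Fin a) (Fin b) ℍ[ℝ])
    (h : ((Mᴴ * M).trace).re = 0) : M = 0 := by
  rw [trace_re_conjT_mul] at h
  have h2 := (Finset.sum_eq_zero_iff_of_nonneg
    (fun j _ => Finset.sum_nonneg fun i _ => Quaternion.normSq_nonneg)).1 h
  refine Matrix.ext fun i j => ?_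
  have h3 := (Finset.sum_eq_zero_iff_of_nonneg
    (fun i _ => Quaternion.normSq_nonneg)).1 (h2 j (Finset.mem_univ j)) i (Finset.mem_univ i)
  simpa [Quaternion.normSq_eq_zero] using h3

lemma trace_re_comm {a b : ℕ} (A : Matrix (Fin a) (Fin b) ℍ[ℝ])
    (B : Matrix (Fin b) (Fin a) ℍ[ℝ]) : ((A * B).trace).re = ((B * A).trace).re := by
  simp only [Matrix.trace, Matrix.diag, Matrix.mul_apply, re_sum]
  rw [Finset.sum_comm]
  exact Finset.sum_congr rfl fun j _ => Finset.sum_congr rfl fun i _ => re_mul_comm _ _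

lemma quad_eq_zero {d : ℕ} (T : Matrix (Fin d) (Fin d) ℍ[ℝ]) (hT : Tᴴ = T)
    (h : ∀ x : Fin d → ℍ[ℝ], ∑ i, ∑ k, star (x i) * T i k * x k = 0) : T = 0 := by
  have diag : ∀ i, T i i = 0 := by
    intro i
    have := h (Pi.single i (1 : ℍ[ℝ]))
    simpa [Pi.single_apply, apply_ite (star : ℍ[ℝ] → ℍ[ℝ]), ite_mul, mul_ite,
      Finset.sum_ite_eq] using this
  have off : ∀ i k, i ≠ k → ∀ α : ℍ[ℝ], star α * T k i + T i k * α = 0 := by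
    intro i k hik α
    have hx := h (fun m => (Pi.single i (1 : ℍ[ℝ]) : Fin d → ℍ[ℝ]) m
      + (Pi.single k α : Fin d → ℍ[ℝ]) m)
    simp only [star_add, add_mul, mul_add, Finset.sum_add_distrib, Pi.single_apply,
      apply_ite (star : ℍ[ℝ] → ℍ[ℝ]), ite_mul, mul_ite, mul_zero, zero_mul, star_zero,
      star_one, one_mul, mul_one, Finset.sum_ite_eq, Finset.sum_ite_eq',
      Finset.mem_univ, if_true] at hx
    rw [diag i, diag k] at hx
    simpa [hik, Ne.symm hik, add_comm] using hx
  refine Matrix.ext fun i k => ?_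
  rcases eq_or_ne i k with rfl | hik
  · simp [diag i]
  · have hki : T k i = star (T i k) := by
      conv_lhs => rw [← hT]
      simp [conjTranspose_apply]
    have key : ∀ α : ℍ[ℝ], (T i k * α).re = 0 := by
      intro α
      have h0 := off i k hik α
      rw [hki] at h0
      have h2 : T i k * α + star (T i k * α) = 0 := by
        rw [StarMul.star_mul, add_comm]; exact h0
      have h3 := congrArg QuaternionAlgebra.re h2
      simp only [Quaternion.re_add, Quaternion.re_star, Quaternion.re_zero] at h3
      linarith
    have e1 := key 1
    have e2 := (Quaternion.re_mul _ _).symm.trans (key ⟨0, 1, 0, 0⟩)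
    have e3 := (Quaternion.re_mul _ _).symm.trans (key ⟨0, 0, 1, 0⟩)
    have e4 := (Quaternion.re_mul _ _).symm.trans (key ⟨0, 0, 0, 1⟩)
    simp only [Quaternion.re_mul, mul_one] at e1 e2 e3 e4
    simp only [mul_zero, sub_zero, zero_sub, neg_eq_zero] at e2 e3 e4
    apply Quaternion.ext <;> simp [e1, e2, e3, e4]

/-- A Hermitian matrix `S` with `S(SS) = SS` and real trace `d` is the identity. -/
lemma proj_eq_one {d : ℕ} (S : Matrix (Fin d) (Fin d) ℍ[ℝ]) (hS : Sᴴ = S)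
    (h3 : S * (S * S) = S * S) (htr : (S.trace).re = d) : S = 1 := by
  have h5 : S * S * S = S * S := by rw [Matrix.mul_assoc, h3]
  have h4 : S * S * (S * S) = S * S := by rw [Matrix.mul_assoc, h3, h3]
  have hSS : S * S = S := by
    have hT : (S * S - S)ᴴ = S * S - S := by
      simp [Matrix.conjTranspose_sub, Matrix.conjTranspose_mul, hS]
    have hTT : (S * S - S)ᴴ * (S * S - S) = 0 := by
      rw [hT]
      have expand : (S * S - S) * (S * S - S)
          = S * S * (S * S) - S * S * S - S * (S * S) + S * S := by
        noncomm_ring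
      rw [expand, h4, h5, h3]
      abel
    have := eq_zero_of_trace_re _ (by rw [hTT]; simp)
    rwa [sub_eq_zero] at this
  have hQ : (1 - S : Matrix (Fin d) (Fin d) ℍ[ℝ]) = 0 := by
    apply eq_zero_of_trace_re
    have hQH : (1 - S : Matrix (Fin d) (Fin d) ℍ[ℝ])ᴴ = 1 - S := by
      simp [Matrix.conjTranspose_sub, hS]
    have hQ2 : ((1 : Matrix (Fin d) (Fin d) ℍ[ℝ]) - S) * (1 - S) = 1 - S := by
      simp only [sub_mul, mul_sub, Matrix.one_mul, Matrix.mul_one, hSS]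
      abel
    rw [hQH, hQ2, Matrix.trace_sub, Matrix.trace_one]
    simp [htr]
  have := sub_eq_zero.1 hQ
  exact this.symm

end NTFAux

open NTFAux in
/-- Equivalent characterisations of normalised tight frames for `ℍ^d`:
(i) Parseval identity, (ii) frame expansion, (ii') `V Vᴴ = I`, (iii) Plancherel
identity, (iv) the Gramian `P = Vᴴ V` is an orthogonal projection with
`Re (trace P) = d`. -/
theorem normalised_tight_frame_tfae (d n : ℕ) (V : Matrix (Fin d) (Fin n) ℍ[ℝ]) :
    List.TFAE
      [ -- (i) normalised tight frame
        ∀ x : Fin d → ℍ[ℝ],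
          ∑ j, Quaternion.normSq (qip x (fun i => V i j)) = nsq x,
        -- (ii) frame expansion
        ∀ x : Fin d → ℍ[ℝ],
          x = fun i => ∑ j, V i j * qip x (fun i' => V i' j),
        -- (ii) equivalently, `V Vᴴ = I`
        V * Vᴴ = 1,
        -- (iii) Plancherel identity
        ∀ x y : Fin d → ℍ[ℝ],
          qip x y = ∑ j, qip (fun i => V i j) y * qip x (fun i => V i j),
        -- (iv) the Gramian is a rank `d` orthogonal projection
        (Vᴴ * V) * (Vᴴ * V) = Vᴴ * V ∧ (Vᴴ * V)ᴴ = Vᴴ * V ∧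
          ((Vᴴ * V).trace).re = d ] := by
  have hS : (V * Vᴴ)ᴴ = V * Vᴴ := by
    simp [conjTranspose_mul]
  tfae_have 3 → 2 := by
    intro h3 x
    funext i
    rw [frame_expand, h3]
    simp [Matrix.one_apply, ite_mul, Finset.sum_ite_eq]
  tfae_have 2 → 3 := by
    intro h2
    refine Matrix.ext fun i k => ?_
    have hx := congrFun (h2 (Pi.single k (1 : ℍ[ℝ]))) i
    rw [frame_expand] at hx
    simp only [Pi.single_apply, mul_ite, mul_one, mul_zero, Finset.sum_ite_eq,
      Finset.sum_ite_eq', Finset.mem_univ, if_true] at hx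
    rw [← hx]
    simp [Matrix.one_apply]
  tfae_have 3 → 4 := by
    intro h3 x y
    rw [qip_expand, h3]
    simp [qip, Matrix.one_apply, ite_mul, mul_ite, Finset.sum_ite_eq]
  tfae_have 4 → 1 := by
    intro h4 x
    have hx := h4 x x
    rw [qip_self] at hx
    simp only [qip_mul_self] at hx
    rw [← coe_sum] at hx
    exact (Quaternion.coe_injective hx).symm
  tfae_have 1 → 3 := by
    intro h1
    have hq : ∀ x : Fin d → ℍ[ℝ],
        ∑ i, ∑ k, star (x i) * (V * Vᴴ - 1 : Matrix (Fin d) (Fin d) ℍ[ℝ]) i k * x k = 0 := by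
      intro x
      have e1 : ∑ i, ∑ k, star (x i) * (V * Vᴴ) i k * x k = ((nsq x : ℝ) : ℍ[ℝ]) := by
        rw [← qip_expand]
        rw [Finset.sum_congr rfl fun j _ => qip_mul_self x (fun i => V i j), ← coe_sum, h1 x]
      have e2 : ∑ i, ∑ k, star (x i) * (1 : Matrix (Fin d) (Fin d) ℍ[ℝ]) i k * x k
          = ((nsq x : ℝ) : ℍ[ℝ]) := by
        rw [← qip_self x, qip]
        simp [Matrix.one_apply, ite_mul, mul_ite, Finset.sum_ite_eq]
      simp only [Matrix.sub_apply, mul_sub, sub_mul, Finset.sum_sub_distrib, e1, e2, sub_self]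
    have hT : (V * Vᴴ - 1 : Matrix (Fin d) (Fin d) ℍ[ℝ])ᴴ = V * Vᴴ - 1 := by
      simp [Matrix.conjTranspose_sub, hS]
    have := quad_eq_zero _ hT hq
    rwa [sub_eq_zero] at this
  tfae_have 3 → 5 := by
    intro h3
    refine ⟨?_, by simp [conjTranspose_mul], ?_⟩
    · rw [Matrix.mul_assoc, ← Matrix.mul_assoc V Vᴴ V, h3, Matrix.one_mul]
    · rw [trace_re_comm, h3, Matrix.trace_one]
      simp
  tfae_have 5 → 3 := by
    rintro ⟨hP2, -, hPtr⟩
    have h3 : V * Vᴴ * (V * Vᴴ * (V * Vᴴ)) = V * Vᴴ * (V * Vᴴ) := by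
      have := congrArg (fun M => V * M * Vᴴ) hP2
      simp only [Matrix.mul_assoc] at this ⊢
      exact this
    have htrS : ((V * Vᴴ).trace).re = d := by
      rw [trace_re_comm]; exact hPtr
    exact proj_eq_one _ hS h3 htrS
  tfae_finish
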